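/- Let 𝒜_{(q₀,r)} = (Q,{a,b},δ) be an n-state synchronizing almost permutation automaton with sink state q₀ and pre-sink state r, and let k be a positive multiple of the order of the letter a. Then rt(𝒜_{(q₀,r)}(k,r)) ≤ rt(𝒜_{(q₀,r)}) + n·k; more precisely, if w = v₂v₃⋯v_n is a reset word for 𝒜_{(q₀,r)} factored so that for each d the prefix v₂⋯v_d is the shortest prefix mapping at least d states of Q to q₀, then the word w' = a^k v₂ a^k v₃ a^k ⋯ v_n a^k is a reset word for 𝒜_{(q₀,r)}(k,r). -/

import Mathlib

/-- The two letters of a binary alphabet. -/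
inductive Letter where
  | a : Letter
  | b : Letter
deriving DecidableEq

/-- Extension of a transition function `δ : Q → Letter → Q` to words
(lists of letters), acting on the left: `δ(q, uv) = δ(δ(q, u), v)`. -/
def deltaStar {Q : Type*} (δ : Q → Letter → Q) (q : Q) (w : List Letter) : Q :=
  w.foldl δ q

/-- `w` is a reset word for the automaton with transition function `δ`. -/
def IsResetWord {Q : Type*} (δ : Q → Letter → Q) (w : List Letter) : Prop :=
  ∀ p q : Q, deltaStar δ p w = deltaStar δ q w

/-- The reset threshold: the minimum length of a reset word. -/
noncomputable def resetThreshold {Q : Type*} (δ : Q → Letter → Q) : ℕ :=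
  sInf {l : ℕ | ∃ w : List Letter, IsResetWord δ w ∧ w.length = l}

/-- The tail extension `𝒜(k, r)` of a binary DFA `𝒜 = (Q, {a,b}, δ)` with sink
state `q0`: the state set is `Q ⊕ Fin k` with `Sum.inr i` playing the role of
the tail state `tᵢ`, and
`δ'(s,a) = δ(s,a)` for `s ∈ Q \ {q0}`, `δ'(q0,a) = t_{k-1}`, `δ'(t0,a) = t0`,
`δ'(tᵢ,a) = t_{i-1}` for `1 ≤ i ≤ k-1`; `δ'(s,b) = δ(s,b)` for `s ∈ Q \ {q0}`,
`δ'(t0,b) = t0`, and `δ'(s,b) = r` for `s ∈ {q0, t1, …, t_{k-1}}`. -/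
def tailExt {Q : Type*} [DecidableEq Q] (δ : Q → Letter → Q) (q0 r : Q)
    (k : ℕ) (hk : 0 < k) : Q ⊕ Fin k → Letter → Q ⊕ Fin k
  | Sum.inl s, Letter.a =>
      if s = q0 then Sum.inr ⟨k - 1, Nat.sub_lt hk Nat.one_pos⟩
      else Sum.inl (δ s Letter.a)
  | Sum.inl s, Letter.b =>
      if s = q0 then Sum.inl r else Sum.inl (δ s Letter.b)
  | Sum.inr i, Letter.a =>
      if (i : ℕ) = 0 then Sum.inr i
      else Sum.inr ⟨(i : ℕ) - 1, Nat.lt_of_le_of_lt (Nat.sub_le _ _) i.isLt⟩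
  | Sum.inr i, Letter.b =>
      if (i : ℕ) = 0 then Sum.inr i else Sum.inl r

set_option linter.unusedSectionVars false

section VorelAux

variable {Q : Type*} [DecidableEq Q]

lemma deltaStar_append (δ : Q → Letter → Q) (q : Q) (u v : List Letter) :
    deltaStar δ q (u ++ v) = deltaStar δ (deltaStar δ q u) v := by
  simp [deltaStar, List.foldl_append]

lemma deltaStar_cons (δ : Q → Letter → Q) (q : Q) (ℓ : Letter) (u : List Letter) :
    deltaStar δ q (ℓ :: u) = deltaStar δ (δ q ℓ) u := rfl

lemma deltaStar_sink (δ : Q → Letter → Q) {q0 : Q} (hsink : ∀ ℓ, δ q0 ℓ = q0)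
    (u : List Letter) : deltaStar δ q0 u = q0 := by
  induction u with
  | nil => rfl
  | cons ℓ u ih => rw [deltaStar_cons, hsink]; exact ih

lemma deltaStar_replicate_mul (δ : Q → Letter → Q) (ord : ℕ)
    (hordid : ∀ q : Q, deltaStar δ q (List.replicate ord Letter.a) = q)
    (m : ℕ) (q : Q) : deltaStar δ q (List.replicate (m * ord) Letter.a) = q := by
  induction m generalizing q with
  | zero => simp [deltaStar]
  | succ m ih =>
      rw [Nat.succ_mul, List.replicate_add, deltaStar_append, ih, hordid]

lemma deltaStar_replicate_ne (δ : Q → Letter → Q) {q0 : Q}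
    (hainj : Function.Injective fun s => δ s Letter.a) (hfix : δ q0 Letter.a = q0)
    (j : ℕ) {s : Q} (hs : s ≠ q0) :
    deltaStar δ s (List.replicate j Letter.a) ≠ q0 := by
  induction j generalizing s with
  | zero => exact hs
  | succ j ih =>
      rw [List.replicate_succ, deltaStar_cons]
      exact ih (fun h => hs (hainj (h.trans hfix.symm)))

lemma tailExt_inl_ne (δ : Q → Letter → Q) (q0 r : Q) (k : ℕ) (hk : 0 < k)
    {s : Q} (hs : s ≠ q0) (ℓ : Letter) :
    tailExt δ q0 r k hk (Sum.inl s) ℓ = Sum.inl (δ s ℓ) := by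
  cases ℓ <;> simp [tailExt, hs]

lemma tailExt_t0 (δ : Q → Letter → Q) (q0 r : Q) (k : ℕ) (hk : 0 < k)
    (u : List Letter) :
    deltaStar (tailExt δ q0 r k hk) (Sum.inr ⟨0, hk⟩) u = Sum.inr ⟨0, hk⟩ := by
  induction u with
  | nil => rfl
  | cons ℓ u ih =>
      rw [deltaStar_cons]
      have h : tailExt δ q0 r k hk (Sum.inr ⟨0, hk⟩) ℓ = Sum.inr ⟨0, hk⟩ := by
        cases ℓ <;> simp [tailExt]
      rw [h, ih]

lemma tailExt_tail_replicate (δ : Q → Letter → Q) (q0 r : Q) (k : ℕ) (hk : 0 < k) :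
    ∀ (j : ℕ) (i : Fin k), (i : ℕ) ≤ j →
      deltaStar (tailExt δ q0 r k hk) (Sum.inr i) (List.replicate j Letter.a)
        = Sum.inr ⟨0, hk⟩ := by
  intro j
  induction j with
  | zero =>
      intro i hi
      have h0 : (i : ℕ) = 0 := Nat.le_zero.mp hi
      have : i = (⟨0, hk⟩ : Fin k) := Fin.ext h0
      rw [this]; rfl
  | succ j ih =>
      intro i hi
      rw [List.replicate_succ, deltaStar_cons]
      by_cases h0 : (i : ℕ) = 0
      · have h : tailExt δ q0 r k hk (Sum.inr i) Letter.a = Sum.inr i := by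
          simp [tailExt, h0]
        rw [h]; exact ih i (by omega)
      · have h : tailExt δ q0 r k hk (Sum.inr i) Letter.a
            = Sum.inr ⟨(i : ℕ) - 1, Nat.lt_of_le_of_lt (Nat.sub_le _ _) i.isLt⟩ := by
          simp [tailExt, h0]
        rw [h]; exact ih _ (by simp; omega)

lemma tailExt_agree (δ : Q → Letter → Q) (q0 r : Q) (k : ℕ) (hk : 0 < k) :
    ∀ (u : List Letter) (s : Q),
      (∀ j, j < u.length → deltaStar δ s (u.take j) ≠ q0) →
      deltaStar (tailExt δ q0 r k hk) (Sum.inl s) u = Sum.inl (deltaStar δ s u) := by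
  intro u
  induction u with
  | nil => intro s _; rfl
  | cons ℓ u ih =>
      intro s h
      have hs : s ≠ q0 := by simpa [deltaStar] using h 0 (Nat.succ_pos _)
      rw [deltaStar_cons, deltaStar_cons, tailExt_inl_ne δ q0 r k hk hs]
      exact ih (δ s ℓ) (fun j hj => by
        have h2 := h (j + 1) (by simpa using hj)
        rwa [List.take_succ_cons, deltaStar_cons] at h2)

lemma tailExt_q0_replicate (δ : Q → Letter → Q) (q0 r : Q) (k : ℕ) (hk : 0 < k) :
    deltaStar (tailExt δ q0 r k hk) (Sum.inl q0) (List.replicate k Letter.a)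
      = Sum.inr ⟨0, hk⟩ := by
  obtain ⟨k', rfl⟩ : ∃ k', k = k' + 1 := ⟨k - 1, by omega⟩
  rw [List.replicate_succ, deltaStar_cons]
  have h : tailExt δ q0 r (k' + 1) hk (Sum.inl q0) Letter.a
      = Sum.inr ⟨k' + 1 - 1, Nat.sub_lt hk Nat.one_pos⟩ := by simp [tailExt]
  rw [h]
  exact tailExt_tail_replicate δ q0 r (k' + 1) hk k' _ (by simp)

lemma sum_map_add_const {α : Type*} (l : List α) (g : α → ℕ) (c : ℕ) :
    (l.map (fun v => g v + c)).sum = (l.map g).sum + l.length * c := by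
  induction l with
  | nil => simp
  | cons x l ih => simp [ih]; ring

end VorelAux

/-- Upper bound in Vorel's lemma: `rt(𝒜(k,r)) ≤ rt(𝒜) + n·k`; more precisely,
if `w = v₂v₃⋯vₙ` is a reset word for `𝒜` factored so that for each `d` the
prefix `v₂⋯v_d` is the shortest prefix of `w` mapping at least `d` states to
`q0`, then `w' = aᵏv₂aᵏv₃aᵏ⋯vₙaᵏ` is a reset word for `𝒜(k,r)`. -/
theorem resetThreshold_tailExt_le
    {Q : Type*} [Fintype Q] [DecidableEq Q]
    (δ : Q → Letter → Q) (q0 r : Q) (n : ℕ)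
    -- `𝒜` has `n` states
    (hn : Fintype.card Q = n)
    -- `q0` is a sink state
    (hsink : ∀ ℓ : Letter, δ q0 ℓ = q0)
    -- `𝒜` is synchronizing
    (hsync : ∃ w : List Letter, IsResetWord δ w)
    -- `r` is the unique state of `Q \ {q0}` with `δ(r, b) = q0` (the pre-sink state)
    (hrne : r ≠ q0)
    (hrb : δ r Letter.b = q0)
    (hruniq : ∀ s : Q, s ≠ q0 → δ s Letter.b = q0 → s = r)
    -- the letter `b` acts as a permutation on `Q \ {r}`
    (hb : Set.BijOn (fun s => δ s Letter.b) {r}ᶜ {r}ᶜ)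
    -- the letter `a` acts as a permutation on `Q`
    (ha : Function.Bijective fun s => δ s Letter.a)
    -- `ord` is the order of the letter `a`: the least `j ≥ 1` such that `a^j` acts as the identity
    (ord : ℕ) (hord : 0 < ord)
    (hordid : ∀ q : Q, deltaStar δ q (List.replicate ord Letter.a) = q)
    (hordleast : ∀ j : ℕ, 0 < j →
      (∀ q : Q, deltaStar δ q (List.replicate j Letter.a) = q) → ord ≤ j)
    -- `k` is a positive multiple of the order of `a`
    (k m : ℕ) (hm : 0 < m) (hkm : k = m * ord) (hk : 0 < k) :
    resetThreshold (tailExt δ q0 r k hk) ≤ resetThreshold δ + n * k ∧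
      ∀ (w : List Letter) (vs : List (List Letter)),
        IsResetWord δ w →
        vs.length = n - 1 →
        w = vs.flatten →
        (∀ d : ℕ, 2 ≤ d → d ≤ n →
          -- the prefix `v₂⋯v_d` maps at least `d` states of `Q` to `q0` …
          d ≤ (Finset.univ.filter
                (fun q : Q => deltaStar δ q ((vs.take (d - 1)).flatten) = q0)).card ∧
          -- … and it is the shortest prefix of `w` doing so
          ∀ u : List Letter, u <+: w →
            u.length < ((vs.take (d - 1)).flatten).length →
            (Finset.univ.filter (fun q : Q => deltaStar δ q u = q0)).card < d) →
        IsResetWord (tailExt δ q0 r k hk)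
          (List.replicate k Letter.a ++
            (vs.map (fun v => v ++ List.replicate k Letter.a)).flatten) := by
  classical
  have hainj : Function.Injective fun s => δ s Letter.a := ha.injective
  have hafix : δ q0 Letter.a = q0 := hsink Letter.a
  have hn2 : 2 ≤ n := by
    have hnt : Nontrivial Q := ⟨⟨r, q0, hrne⟩⟩
    have := Fintype.one_lt_card (α := Q)
    omega
  have hreset_q0 : ∀ w : List Letter, IsResetWord δ w → ∀ q : Q,
      deltaStar δ q w = q0 := by
    intro w hw q
    have h := hw q q0
    rwa [deltaStar_sink δ hsink] at h
  have hkrep : ∀ q : Q, deltaStar δ q (List.replicate k Letter.a) = q := by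
    intro q; rw [hkm]; exact deltaStar_replicate_mul δ ord hordid m q
  have hak_ne : ∀ s : Q, s ≠ q0 →
      deltaStar (tailExt δ q0 r k hk) (Sum.inl s) (List.replicate k Letter.a)
        = Sum.inl s := by
    intro s hs
    have h := tailExt_agree δ q0 r k hk (List.replicate k Letter.a) s ?_
    · rw [h, hkrep]
    · intro j hj
      rw [List.take_replicate]
      exact deltaStar_replicate_ne δ hainj hafix _ hs
  have key : ∀ (w : List Letter) (vs : List (List Letter)),
      IsResetWord δ w →
      vs.length = n - 1 →
      w = vs.flatten →
      (∀ d : ℕ, 2 ≤ d → d ≤ n →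
        d ≤ (Finset.univ.filter
              (fun q : Q => deltaStar δ q ((vs.take (d - 1)).flatten) = q0)).card ∧
        ∀ u : List Letter, u <+: w →
          u.length < ((vs.take (d - 1)).flatten).length →
          (Finset.univ.filter (fun q : Q => deltaStar δ q u = q0)).card < d) →
      IsResetWord (tailExt δ q0 r k hk)
        (List.replicate k Letter.a ++
          (vs.map (fun v => v ++ List.replicate k Letter.a)).flatten) := by
    intro w vs hw hlen hflat hcond
    have main : ∀ d, d ≤ n - 1 → ∀ s : Q,
        deltaStar (tailExt δ q0 r k hk) (Sum.inl s)
          (List.replicate k Letter.a ++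
            ((vs.take d).map (fun v => v ++ List.replicate k Letter.a)).flatten)
          = if deltaStar δ s ((vs.take d).flatten) = q0
            then (Sum.inr ⟨0, hk⟩ : Q ⊕ Fin k)
            else Sum.inl (deltaStar δ s ((vs.take d).flatten)) := by
      intro d
      induction d with
      | zero =>
          intro _ s
          simp only [List.take_zero, List.map_nil, List.flatten_nil, List.append_nil]
          have hnil : deltaStar δ s ([] : List Letter) = s := rfl
          simp only [hnil]
          by_cases hs : s = q0
          · rw [if_pos hs, hs]
            exact tailExt_q0_replicate δ q0 r k hk
          · rw [if_neg hs]
            exact hak_ne s hs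
      | succ d ih =>
          intro hd1 s
          have hd : d ≤ n - 1 := by omega
          have hdlt : d < vs.length := by omega
          have htake : vs.take (d+1) = vs.take d ++ [vs[d]] := by
            rw [List.take_succ]
            simp [List.getElem?_eq_getElem hdlt]
          have hflat1 : (vs.take (d+1)).flatten = (vs.take d).flatten ++ vs[d] := by
            rw [htake, List.flatten_append]; simp
          have hW : ((vs.take (d+1)).map (fun v => v ++ List.replicate k Letter.a)).flatten
              = ((vs.take d).map (fun v => v ++ List.replicate k Letter.a)).flatten
                ++ (vs[d] ++ List.replicate k Letter.a) := by
            rw [htake, List.map_append, List.flatten_append]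
            simp only [List.map_cons, List.map_nil, List.flatten_cons,
              List.flatten_nil, List.append_nil]
          rw [hW, ← List.append_assoc, deltaStar_append, ih hd s]
          by_cases hq : deltaStar δ s ((vs.take d).flatten) = q0
          · rw [if_pos hq, tailExt_t0 δ q0 r k hk, hflat1, deltaStar_append, hq,
              deltaStar_sink δ hsink, if_pos rfl]
          · rw [if_neg hq]
            set q := deltaStar δ s ((vs.take d).flatten) with hqdef
            have hSd : d + 1 ≤ (Finset.univ.filter
                (fun p : Q => deltaStar δ p ((vs.take d).flatten) = q0)).card := by
              rcases Nat.eq_zero_or_pos d with h0 | h0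
              · subst h0
                have hq0mem : q0 ∈ Finset.univ.filter
                    (fun p : Q => deltaStar δ p ((vs.take 0).flatten) = q0) := by
                  rw [Finset.mem_filter]; exact ⟨Finset.mem_univ _, rfl⟩
                have := Finset.card_pos.mpr ⟨q0, hq0mem⟩
                omega
              · have h := (hcond (d+1) (by omega) (by omega)).1
                have heq : d + 1 - 1 = d := by omega
                rwa [heq] at h
            have havoid : ∀ j, j < (vs[d]).length →
                deltaStar δ q ((vs[d]).take j) ≠ q0 := by
              intro j hj hcontra
              have hupref : (vs.take d).flatten ++ (vs[d]).take j <+: w := by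
                refine ⟨(vs[d]).drop j ++ (vs.drop (d+1)).flatten, ?_⟩
                rw [hflat]
                calc ((vs.take d).flatten ++ (vs[d]).take j)
                      ++ ((vs[d]).drop j ++ (vs.drop (d+1)).flatten)
                    = ((vs.take d).flatten ++ ((vs[d]).take j ++ (vs[d]).drop j))
                        ++ (vs.drop (d+1)).flatten := by
                      simp only [List.append_assoc]
                  _ = (vs.take (d+1)).flatten ++ (vs.drop (d+1)).flatten := by
                      rw [List.take_append_drop, ← hflat1]
                  _ = vs.flatten := by rw [← List.flatten_append, List.take_append_drop]
              have hulen : ((vs.take d).flatten ++ (vs[d]).take j).length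
                  < ((vs.take (d+2-1)).flatten).length := by
                have heq : d + 2 - 1 = d + 1 := rfl
                rw [heq, hflat1]
                simp only [List.length_append, List.length_take]
                omega
              have hlt := (hcond (d+2) (by omega) (by omega)).2 _ hupref hulen
              have hsub : Finset.univ.filter
                    (fun p : Q => deltaStar δ p ((vs.take d).flatten) = q0)
                  ⊆ Finset.univ.filter
                    (fun p : Q => deltaStar δ p ((vs.take d).flatten ++ (vs[d]).take j) = q0) := by
                intro p hp
                simp only [Finset.mem_filter, Finset.mem_univ, true_and] at hp ⊢
                rw [deltaStar_append, hp, deltaStar_sink δ hsink]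
              have hsmem : deltaStar δ s ((vs.take d).flatten ++ (vs[d]).take j) = q0 := by
                rw [deltaStar_append, ← hqdef, hcontra]
              have hsnot : s ∉ Finset.univ.filter
                  (fun p : Q => deltaStar δ p ((vs.take d).flatten) = q0) := by
                simp only [Finset.mem_filter, Finset.mem_univ, true_and]
                rw [← hqdef]; exact hq
              have hins : insert s (Finset.univ.filter
                    (fun p : Q => deltaStar δ p ((vs.take d).flatten) = q0))
                  ⊆ Finset.univ.filter
                    (fun p : Q => deltaStar δ p ((vs.take d).flatten ++ (vs[d]).take j) = q0) := by
                intro p hp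
                rcases Finset.mem_insert.mp hp with rfl | hp
                · simp only [Finset.mem_filter, Finset.mem_univ, true_and]
                  exact hsmem
                · exact hsub hp
              have hcard := Finset.card_le_card hins
              rw [Finset.card_insert_of_notMem hsnot] at hcard
              omega
            have hstep : deltaStar (tailExt δ q0 r k hk) (Sum.inl q) vs[d]
                = Sum.inl (deltaStar δ q vs[d]) :=
              tailExt_agree δ q0 r k hk vs[d] q havoid
            rw [deltaStar_append, hstep, hflat1, deltaStar_append, ← hqdef]
            by_cases hq' : deltaStar δ q vs[d] = q0
            · rw [hq', if_pos rfl]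
              exact tailExt_q0_replicate δ q0 r k hk
            · rw [if_neg hq']
              exact hak_ne _ hq'
    have hvsfull : vs.take (n-1) = vs := by rw [← hlen, List.take_length]
    have hall : ∀ p : Q ⊕ Fin k, deltaStar (tailExt δ q0 r k hk) p
        (List.replicate k Letter.a ++
          (vs.map (fun v => v ++ List.replicate k Letter.a)).flatten)
        = Sum.inr ⟨0, hk⟩ := by
      intro p
      cases p with
      | inl s =>
          have h := main (n-1) le_rfl s
          rw [hvsfull] at h
          rw [h, ← hflat, if_pos (hreset_q0 w hw s)]
      | inr i =>
          rw [deltaStar_append,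
            tailExt_tail_replicate δ q0 r k hk k i (le_of_lt i.isLt)]
          exact tailExt_t0 δ q0 r k hk _
    intro p q
    rw [hall p, hall q]
  refine ⟨?_, key⟩
  have hsetne : {l : ℕ | ∃ w : List Letter, IsResetWord δ w ∧ w.length = l}.Nonempty := by
    obtain ⟨w, hw⟩ := hsync; exact ⟨w.length, w, hw, rfl⟩
  obtain ⟨w, hw, hwlen⟩ := Nat.sInf_mem hsetne
  have hrt : resetThreshold δ = w.length := hwlen.symm
  set cnt : ℕ → ℕ := fun j =>
    (Finset.univ.filter (fun q : Q => deltaStar δ q (w.take j) = q0)).card with hcnt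
  have hcnt_mono : ∀ {j j' : ℕ}, j ≤ j' → cnt j ≤ cnt j' := by
    intro j j' hjj
    apply Finset.card_le_card
    intro p hp
    simp only [Finset.mem_filter, Finset.mem_univ, true_and] at hp ⊢
    have hsplit : w.take j' = w.take j ++ (w.take j').drop j := by
      conv_lhs => rw [← List.take_append_drop j (w.take j')]
      rw [List.take_take, min_eq_left hjj]
    rw [hsplit, deltaStar_append, hp, deltaStar_sink δ hsink]
  have hcnt_full : cnt w.length = n := by
    have hall : ∀ q : Q, deltaStar δ q (w.take w.length) = q0 := by
      rw [List.take_length]; exact hreset_q0 w hw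
    simp only [hcnt]
    rw [Finset.filter_true_of_mem (fun q _ => hall q), Finset.card_univ, hn]
  set mm : ℕ → ℕ := fun d => sInf {j | d ≤ cnt j} with hmm
  have hmm_ne : ∀ d, d ≤ n → {j | d ≤ cnt j}.Nonempty := by
    intro d hd; exact ⟨w.length, by simp only [Set.mem_setOf_eq, hcnt_full]; omega⟩
  have hmm_mem : ∀ d, d ≤ n → d ≤ cnt (mm d) := by
    intro d hd; exact Nat.sInf_mem (hmm_ne d hd)
  have hmm_le : ∀ d, d ≤ n → mm d ≤ w.length := by
    intro d hd
    exact Nat.sInf_le (by simp only [Set.mem_setOf_eq, hcnt_full]; omega)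
  have hmm_min : ∀ d j, d ≤ cnt j → mm d ≤ j := by
    intro d j hj; exact Nat.sInf_le hj
  have hmm_mono : ∀ d e, d ≤ e → e ≤ n → mm d ≤ mm e := by
    intro d e hde he
    exact hmm_min d (mm e) (le_trans hde (hmm_mem e he))
  have hmm_one : mm 1 = 0 := by
    have h1 : 1 ≤ cnt 0 := by
      have hq0mem : q0 ∈ Finset.univ.filter
          (fun q : Q => deltaStar δ q (w.take 0) = q0) := by
        rw [Finset.mem_filter]; exact ⟨Finset.mem_univ _, rfl⟩
      exact Finset.card_pos.mpr ⟨q0, hq0mem⟩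
    exact Nat.le_zero.mp (hmm_min 1 0 h1)
  have hmm_n : mm n = w.length := by
    refine le_antisymm (hmm_le n le_rfl) ?_
    have hc := hmm_mem n le_rfl
    have hfilter : Finset.univ.filter
        (fun q : Q => deltaStar δ q (w.take (mm n)) = q0) = Finset.univ := by
      apply Finset.eq_univ_of_card
      have hle : (Finset.univ.filter
          (fun q : Q => deltaStar δ q (w.take (mm n)) = q0)).card ≤ Fintype.card Q :=
        Finset.card_le_card (Finset.subset_univ _)
      simp only [hcnt] at hc
      omega
    have hallq : ∀ q : Q, deltaStar δ q (w.take (mm n)) = q0 := by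
      intro q
      have := Finset.mem_filter.mp (hfilter ▸ Finset.mem_univ q)
      exact this.2
    have hrw : IsResetWord δ (w.take (mm n)) := by
      intro p q; rw [hallq p, hallq q]
    have hle2 : resetThreshold δ ≤ (w.take (mm n)).length :=
      Nat.sInf_le ⟨w.take (mm n), hrw, rfl⟩
    rw [hrt] at hle2
    rw [List.length_take] at hle2
    omega
  set vs : List (List Letter) :=
    (List.range (n-1)).map (fun i => (w.take (mm (i+2))).drop (mm (i+1))) with hvs
  have hvslen : vs.length = n - 1 := by simp [hvs]
  have hflat_take : ∀ e, e ≤ n - 1 → (vs.take e).flatten = w.take (mm (e+1)) := by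
    intro e
    induction e with
    | zero => intro _; simp [hmm_one]
    | succ e ih =>
        intro he1
        have he : e ≤ n - 1 := by omega
        have helt : e < vs.length := by omega
        have hget : vs[e] = (w.take (mm (e+2))).drop (mm (e+1)) := by
          simp [hvs]
        have htake : vs.take (e+1) = vs.take e ++ [vs[e]] := by
          rw [List.take_succ]
          simp [List.getElem?_eq_getElem helt]
        rw [htake, List.flatten_append]
        simp only [List.flatten_cons, List.flatten_nil, List.append_nil]
        rw [ih he, hget]
        have h12 : mm (e+1) ≤ mm (e+2) := hmm_mono (e+1) (e+2) (by omega) (by omega)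
        have hrw2 : w.take (mm (e+1)) = (w.take (mm (e+2))).take (mm (e+1)) := by
          rw [List.take_take, min_eq_left h12]
        rw [hrw2, List.take_append_drop]
  have hwflat : w = vs.flatten := by
    have h1 : vs.take (n-1) = vs := by rw [← hvslen, List.take_length]
    have h2 := hflat_take (n-1) le_rfl
    rw [h1] at h2
    have h3 : n - 1 + 1 = n := by omega
    rw [h3, hmm_n, List.take_length] at h2
    exact h2.symm
  have hcond : ∀ d : ℕ, 2 ≤ d → d ≤ n →
      d ≤ (Finset.univ.filter
            (fun q : Q => deltaStar δ q ((vs.take (d - 1)).flatten) = q0)).card ∧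
      ∀ u : List Letter, u <+: w →
        u.length < ((vs.take (d - 1)).flatten).length →
        (Finset.univ.filter (fun q : Q => deltaStar δ q u = q0)).card < d := by
    intro d h2 hdn
    have hft := hflat_take (d-1) (by omega)
    have h3 : d - 1 + 1 = d := by omega
    rw [h3] at hft
    constructor
    · rw [hft]
      exact hmm_mem d hdn
    · intro u hu hul
      rw [hft, List.length_take, min_eq_left (hmm_le d hdn)] at hul
      have hueq : u = w.take u.length := List.prefix_iff_eq_take.mp hu
      rw [hueq]
      by_contra hcon
      push_neg at hcon
      have := hmm_min d u.length hcon
      omega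
  have hreset' := key w vs hw hvslen hwflat hcond
  have hlen' : (List.replicate k Letter.a ++
      (vs.map (fun v => v ++ List.replicate k Letter.a)).flatten).length
      = resetThreshold δ + n * k := by
    rw [List.length_append, List.length_replicate, List.length_flatten, List.map_map]
    have hcomp : (List.length ∘ fun v => v ++ List.replicate k Letter.a)
        = fun v : List Letter => v.length + k := by
      funext v; simp
    rw [hcomp, sum_map_add_const]
    have hflen : (vs.map List.length).sum = w.length := by
      rw [hwflat, List.length_flatten]
    rw [hflen, hvslen, hrt]
    have hnk : (n - 1) * k + k = n * k := by
      have h3 : n - 1 + 1 = n := by omega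
      calc (n - 1) * k + k = (n - 1 + 1) * k := by rw [Nat.succ_mul]
        _ = n * k := by rw [h3]
    omega
  calc resetThreshold (tailExt δ q0 r k hk)
      ≤ (List.replicate k Letter.a ++
          (vs.map (fun v => v ++ List.replicate k Letter.a)).flatten).length :=
        Nat.sInf_le ⟨_, hreset', rfl⟩
    _ = resetThreshold δ + n * k := hlen'
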